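/- If θ = (w_1, w_2, a_1, a_2) is along a KKT-margin direction of a width-2 two-layer Leaky ReLU network on a symmetric dataset and a_1 > 0, a_2 < 0, then w_1 = −w_2 and a_1 = −a_2 = ‖w_1‖. -/

import Mathlib

open Finset

/-- Clarke subdifferential of the Leaky ReLU `φ(z) = max{z, αz}`. -/
def clarkeLeaky (α z : ℝ) : Set ℝ :=
  if 0 < z then {1} else if z < 0 then {α} else Set.Icc α 1

lemma clarke_bounds {α z h : ℝ} (hα1 : α ≤ 1) (hh : h ∈ clarkeLeaky α z) :
    α ≤ h ∧ h ≤ 1 := by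
  unfold clarkeLeaky at hh
  split_ifs at hh
  · rw [Set.mem_singleton_iff] at hh; rw [hh]; exact ⟨hα1, le_refl 1⟩
  · rw [Set.mem_singleton_iff] at hh; rw [hh]; exact ⟨le_refl α, hα1⟩
  · exact hh

lemma clarke_mul {α z h : ℝ} (hα1 : α ≤ 1) (hh : h ∈ clarkeLeaky α z) :
    h * z = max z (α * z) := by
  unfold clarkeLeaky at hh
  split_ifs at hh with hz1 hz2
  · rw [Set.mem_singleton_iff] at hh; rw [hh]
    rw [one_mul, max_eq_left (by nlinarith)]
  · rw [Set.mem_singleton_iff] at hh; rw [hh]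
    rw [max_eq_right (by nlinarith)]
  · have hz : z = 0 := le_antisymm (not_lt.1 hz1) (not_lt.1 hz2)
    simp [hz]

lemma clarke_neg {α z h : ℝ} (hz : z < 0) (hh : h ∈ clarkeLeaky α z) : h = α := by
  unfold clarkeLeaky at hh
  rw [if_neg (by linarith), if_pos hz] at hh
  exact hh

set_option maxHeartbeats 8000000 in
/-- If `θ = (w₁, w₂, a₁, a₂)` is along a KKT-margin direction of a width-2
two-layer Leaky ReLU network on a symmetric dataset and `a₁ > 0 > a₂`, then
`w₁ = −w₂` and `a₁ = −a₂ = ‖w₁‖`. -/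
theorem stmt_10 (d n : ℕ) (hn : 0 < n)
    (α : ℝ) (hα : 0 < α) (hα1 : α < 1)
    (φ : ℝ → ℝ) (hφ : ∀ z, φ z = max z (α * z))
    (x : Fin n → EuclideanSpace ℝ (Fin d)) (y : Fin n → ℝ)
    (hy : ∀ i, y i = 1 ∨ y i = -1) (hxnorm : ∀ i, ‖x i‖ ≤ 1)
    (σ : Equiv.Perm (Fin n))
    (hxσ : ∀ i, x (σ i) = - x i) (hyσ : ∀ i, y (σ i) = - y i)
    (w1 w2 : EuclideanSpace ℝ (Fin d)) (a1 a2 : ℝ)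
    (ha1 : 0 < a1) (ha2 : a2 < 0)
    (q : Fin n → ℝ)
    (hq : ∀ i, q i = y i * (a1 * φ (inner ℝ w1 (x i)) + a2 * φ (inner ℝ w2 (x i))))
    (hqpos : ∀ i, 0 < q i)
    (lam : Fin n → ℝ) (hlam : ∀ i, 0 ≤ lam i)
    (h1 h2 : Fin n → ℝ)
    (hmem1 : ∀ i, h1 i ∈ clarkeLeaky α (inner ℝ w1 (x i)))
    (hmem2 : ∀ i, h2 i ∈ clarkeLeaky α (inner ℝ w2 (x i)))
    (hstat_w1 : w1 = ∑ i, (lam i * y i * a1 * h1 i) • x i)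
    (hstat_w2 : w2 = ∑ i, (lam i * y i * a2 * h2 i) • x i)
    (hstat_a1 : a1 = ∑ i, lam i * y i * φ (inner ℝ w1 (x i)))
    (hstat_a2 : a2 = ∑ i, lam i * y i * φ (inner ℝ w2 (x i)))
    (hcompl : ∀ i, q i ≠ Finset.univ.inf' ⟨⟨0, hn⟩, Finset.mem_univ _⟩ q → lam i = 0) :
    w1 = -w2 ∧ a1 = -a2 ∧ a1 = ‖w1‖ := by
  have hα1' : α ≤ 1 := le_of_lt hα1
  have hB : (0:ℝ) < -a2 := by linarith
  -- φ facts
  have phi_nonneg : ∀ z : ℝ, 0 ≤ z → φ z = z := fun z h => by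
    rw [hφ]; exact max_eq_left (by nlinarith)
  have phi_nonpos : ∀ z : ℝ, z ≤ 0 → φ z = α * z := fun z h => by
    rw [hφ]; exact max_eq_right (by nlinarith)
  have phi_le_abs : ∀ z : ℝ, φ z ≤ |z| := by
    intro z
    rcases le_or_gt 0 z with h | h
    · rw [phi_nonneg z h, abs_of_nonneg h]
    · rw [phi_nonpos z h.le, abs_of_neg h]; nlinarith
  have phi_pair : ∀ z : ℝ, φ z + φ (-z) = (1 - α) * |z| := by
    intro z
    rcases le_or_gt 0 z with h | h
    · rw [phi_nonneg z h, phi_nonpos (-z) (by linarith), abs_of_nonneg h]; ring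
    · rw [phi_nonpos z h.le, phi_nonneg (-z) (by linarith), abs_of_neg h]; ring
  -- abbreviations for the inner products
  obtain ⟨c, hc⟩ : ∃ c : Fin n → ℝ, ∀ i, c i = (inner ℝ w1 (x i) : ℝ) :=
    ⟨fun i => (inner ℝ w1 (x i) : ℝ), fun _ => rfl⟩
  obtain ⟨e, he⟩ : ∃ e : Fin n → ℝ, ∀ i, e i = (inner ℝ w2 (x i) : ℝ) :=
    ⟨fun i => (inner ℝ w2 (x i) : ℝ), fun _ => rfl⟩
  have hq' : ∀ i, q i = y i * (a1 * φ (c i) + a2 * φ (e i)) := by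
    intro i; rw [hc, he]; exact hq i
  have hm1 : ∀ i, h1 i ∈ clarkeLeaky α (c i) := fun i => by rw [hc]; exact hmem1 i
  have hm2 : ∀ i, h2 i ∈ clarkeLeaky α (e i) := fun i => by rw [he]; exact hmem2 i
  have hphi1 : ∀ i, h1 i * c i = φ (c i) := fun i => by
    rw [hφ]; exact clarke_mul hα1' (hm1 i)
  have hphi2 : ∀ i, h2 i * e i = φ (e i) := fun i => by
    rw [hφ]; exact clarke_mul hα1' (hm2 i)
  have hcσ : ∀ i, c (σ i) = - c i := fun i => by
    rw [hc, hc, hxσ i, inner_neg_right]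
  have heσ : ∀ i, e (σ i) = - e i := fun i => by
    rw [he, he, hxσ i, inner_neg_right]
  have ha1' : a1 = ∑ i, lam i * y i * φ (c i) := by
    rw [hstat_a1]; exact Finset.sum_congr rfl fun i _ => by rw [hc]
  have ha2' : a2 = ∑ i, lam i * y i * φ (e i) := by
    rw [hstat_a2]; exact Finset.sum_congr rfl fun i _ => by rw [he]
  -- inner product expansions
  have hw11 : (inner ℝ w1 w1 : ℝ) = ∑ i, (lam i * y i * a1 * h1 i) * c i := by
    have h := congrArg (fun v => (inner ℝ w1 v : ℝ)) hstat_w1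
    simp only [inner_sum, real_inner_smul_right] at h
    simpa only [← hc] using h
  have hw21 : (inner ℝ w2 w1 : ℝ) = ∑ i, (lam i * y i * a1 * h1 i) * e i := by
    have h := congrArg (fun v => (inner ℝ w2 v : ℝ)) hstat_w1
    simp only [inner_sum, real_inner_smul_right] at h
    simpa only [← he] using h
  have hw12 : (inner ℝ w1 w2 : ℝ) = ∑ i, (lam i * y i * a2 * h2 i) * c i := by
    have h := congrArg (fun v => (inner ℝ w1 v : ℝ)) hstat_w2
    simp only [inner_sum, real_inner_smul_right] at h
    simpa only [← hc] using h
  have hw22 : (inner ℝ w2 w2 : ℝ) = ∑ i, (lam i * y i * a2 * h2 i) * e i := by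
    have h := congrArg (fun v => (inner ℝ w2 v : ℝ)) hstat_w2
    simp only [inner_sum, real_inner_smul_right] at h
    simpa only [← he] using h
  -- the four scalar sums
  have hC1 : ∑ i, lam i * y i * (h1 i * c i) = a1 := by
    rw [ha1']; exact Finset.sum_congr rfl fun i _ => by rw [hphi1 i]
  have hD2 : ∑ i, lam i * y i * (h2 i * e i) = a2 := by
    rw [ha2']; exact Finset.sum_congr rfl fun i _ => by rw [hphi2 i]
  have hD1 : a1 * ∑ i, lam i * y i * (h1 i * e i) = (inner ℝ w1 w2 : ℝ) := by
    rw [Finset.mul_sum, real_inner_comm w2 w1, hw21]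
    exact Finset.sum_congr rfl fun i _ => by ring
  have hC2 : a2 * ∑ i, lam i * y i * (h2 i * c i) = (inner ℝ w1 w2 : ℝ) := by
    rw [Finset.mul_sum, hw12]
    exact Finset.sum_congr rfl fun i _ => by ring
  have hnorm1 : (inner ℝ w1 w1 : ℝ) = a1 * a1 := by
    rw [hw11]
    have h : ∑ i, (lam i * y i * a1 * h1 i) * c i = a1 * ∑ i, lam i * y i * (h1 i * c i) := by
      rw [Finset.mul_sum]; exact Finset.sum_congr rfl fun i _ => by ring
    rw [h, hC1]
  have hnorm2 : (inner ℝ w2 w2 : ℝ) = a2 * a2 := by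
    rw [hw22]
    have h : ∑ i, (lam i * y i * a2 * h2 i) * e i = a2 * ∑ i, lam i * y i * (h2 i * e i) := by
      rw [Finset.mul_sum]; exact Finset.sum_congr rfl fun i _ => by ring
    rw [h, hD2]
  
  obtain ⟨ip, hip⟩ : ∃ p : ℝ, (inner ℝ w1 w2 : ℝ) = p := ⟨_, rfl⟩
  rw [hip] at hD1 hC2
  -- active point facts
  have hactP : ∀ i, lam i ≠ 0 → y i = 1 → e i < 0 ∧ a1 * |c i| ≤ (-a2) * |e i| := by
    intro i h0 hy1
    have hqle : q i ≤ q (σ i) := by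
      have h1' : q i = Finset.univ.inf' ⟨⟨0, hn⟩, Finset.mem_univ _⟩ q := by
        by_contra hne; exact h0 (hcompl i hne)
      rw [h1']
      exact Finset.inf'_le q (Finset.mem_univ (σ i))
    have hq1 : q i = a1 * φ (c i) + a2 * φ (e i) := by rw [hq' i, hy1]; ring
    have hq2 : q (σ i) = -(a1 * φ (-(c i)) + a2 * φ (-(e i))) := by
      rw [hq' (σ i), hcσ i, heσ i, hyσ i, hy1]; ring
    rw [hq1, hq2] at hqle
    have hp1 : a1 * (φ (c i) + φ (-(c i))) = a1 * ((1 - α) * |c i|) := by rw [phi_pair]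
    have hp2 : a2 * (φ (e i) + φ (-(e i))) = a2 * ((1 - α) * |e i|) := by rw [phi_pair]
    have h5 : a1 * |c i| + a2 * |e i| ≤ 0 := by
      by_contra hcon
      push_neg at hcon
      nlinarith [hqle, hp1, hp2, mul_pos (sub_pos.2 hα1) hcon]
    refine ⟨?_, by linarith⟩
    by_contra hcon
    push_neg at hcon
    have h7 : a2 * φ (e i) = a2 * e i := by rw [phi_nonneg _ hcon]
    have h8 : a1 * φ (c i) ≤ a1 * |c i| := mul_le_mul_of_nonneg_left (phi_le_abs (c i)) ha1.le
    have h9 : 0 < q i := hqpos i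
    rw [hq1] at h9
    have h10 : a2 * |e i| = a2 * e i := by rw [abs_of_nonneg hcon]
    linarith
  have hactN : ∀ i, lam i ≠ 0 → y i = -1 → c i < 0 ∧ (-a2) * |e i| ≤ a1 * |c i| := by
    intro i h0 hy1
    have hqle : q i ≤ q (σ i) := by
      have h1' : q i = Finset.univ.inf' ⟨⟨0, hn⟩, Finset.mem_univ _⟩ q := by
        by_contra hne; exact h0 (hcompl i hne)
      rw [h1']
      exact Finset.inf'_le q (Finset.mem_univ (σ i))
    have hq1 : q i = -(a1 * φ (c i) + a2 * φ (e i)) := by rw [hq' i, hy1]; ring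
    have hq2 : q (σ i) = a1 * φ (-(c i)) + a2 * φ (-(e i)) := by
      rw [hq' (σ i), hcσ i, heσ i, hyσ i, hy1]; ring
    rw [hq1, hq2] at hqle
    have hp1 : a1 * (φ (c i) + φ (-(c i))) = a1 * ((1 - α) * |c i|) := by rw [phi_pair]
    have hp2 : a2 * (φ (e i) + φ (-(e i))) = a2 * ((1 - α) * |e i|) := by rw [phi_pair]
    have h5 : 0 ≤ a1 * |c i| + a2 * |e i| := by
      by_contra hcon
      push_neg at hcon
      nlinarith [hqle, hp1, hp2, mul_pos (sub_pos.2 hα1) (show (0:ℝ) < -(a1 * |c i| + a2 * |e i|) by linarith)]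
    refine ⟨?_, by linarith⟩
    by_contra hcon
    push_neg at hcon
    have h7 : a1 * φ (c i) = a1 * |c i| := by rw [phi_nonneg _ hcon, abs_of_nonneg hcon]
    have h8 : a2 * |e i| ≤ a2 * φ (e i) := mul_le_mul_of_nonpos_left (phi_le_abs (e i)) ha2.le
    have h9 : 0 < q i := hqpos i
    rw [hq1] at h9
    linarith
  
  -- key termwise inequality
  have hkey : ∀ i, lam i * (y i * ((h1 i - h2 i) * ((-a2) * e i + a1 * c i))) ≤ 0 := by
    intro i
    rcases eq_or_ne (lam i) 0 with h0 | h0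
    · rw [h0]; simp
    · have hlm : 0 ≤ lam i := hlam i
      rcases hy i with hy1 | hy1
      · obtain ⟨hneg, hle⟩ := hactP i h0 hy1
        have h2α : h2 i = α := clarke_neg hneg (hm2 i)
        have hb1 := clarke_bounds hα1' (hm1 i)
        have hcc : a1 * c i ≤ a1 * |c i| := mul_le_mul_of_nonneg_left (le_abs_self (c i)) ha1.le
        have habs : (-a2) * |e i| = (-a2) * (-(e i)) := by rw [abs_of_neg hneg]
        have hfac : (-a2) * e i + a1 * c i ≤ 0 := by nlinarith
        rw [hy1, h2α]
        nlinarith [mul_nonneg (mul_nonneg hlm (sub_nonneg.2 hb1.1)) (neg_nonneg.2 hfac)]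
      · obtain ⟨hneg, hle⟩ := hactN i h0 hy1
        have h1α : h1 i = α := clarke_neg hneg (hm1 i)
        have hb2 := clarke_bounds hα1' (hm2 i)
        have hee : (-a2) * e i ≤ (-a2) * |e i| := mul_le_mul_of_nonneg_left (le_abs_self (e i)) hB.le
        have habs : a1 * |c i| = a1 * (-(c i)) := by rw [abs_of_neg hneg]
        have hfac : (-a2) * e i + a1 * c i ≤ 0 := by nlinarith
        rw [hy1, h1α]
        nlinarith [mul_nonneg (mul_nonneg hlm (sub_nonneg.2 hb2.1)) (neg_nonneg.2 hfac)]
  have hS : ∑ i, lam i * (y i * ((h1 i - h2 i) * ((-a2) * e i + a1 * c i))) ≤ 0 :=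
    Finset.sum_nonpos fun i _ => hkey i
  have hSid : ∑ i, lam i * (y i * ((h1 i - h2 i) * ((-a2) * e i + a1 * c i)))
      = (-a2) * (∑ i, lam i * y i * (h1 i * e i)) - (-a2) * (∑ i, lam i * y i * (h2 i * e i))
        + a1 * (∑ i, lam i * y i * (h1 i * c i)) - a1 * (∑ i, lam i * y i * (h2 i * c i)) := by
    rw [Finset.mul_sum, Finset.mul_sum, Finset.mul_sum, Finset.mul_sum,
      ← Finset.sum_sub_distrib, ← Finset.sum_add_distrib, ← Finset.sum_sub_distrib]
    exact Finset.sum_congr rfl fun i _ => by ring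
  rw [hSid, hD2, hC1] at hS
  -- hS : (-a2) * S3 - (-a2) * a2 + a1 * a1 - a1 * S4 ≤ 0
  have h10 : a1 * (-a2) * ((-a2) * (∑ i, lam i * y i * (h1 i * e i)) - (-a2) * a2
      + a1 * a1 - a1 * (∑ i, lam i * y i * (h2 i * c i))) ≤ 0 := by
    nlinarith [mul_nonneg (mul_pos ha1 hB).le (neg_nonneg.2 hS)]
  have h12 : a1 * (-a2) * ((-a2) * (∑ i, lam i * y i * (h1 i * e i)) - (-a2) * a2
      + a1 * a1 - a1 * (∑ i, lam i * y i * (h2 i * c i)))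
      = (a1 * a1 + a2 * a2) * (ip + a1 * (-a2)) := by
    linear_combination (a2 * a2) * hD1 + (a1 * a1) * hC2
  have hψle : ip ≤ a1 * a2 := by
    rw [h12] at h10
    by_contra hcon
    push_neg at hcon
    nlinarith [h10, mul_pos (show (0:ℝ) < a1 * a1 + a2 * a2 by nlinarith [mul_pos ha1 ha1, mul_pos_of_neg_of_neg ha2 ha2])
      (show (0:ℝ) < ip + a1 * (-a2) by nlinarith)]
  -- the combination (-a2) • w1 + a1 • w2 vanishes
  have hq0 : (inner ℝ ((-a2) • w1 + a1 • w2) ((-a2) • w1 + a1 • w2) : ℝ)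
      = (-a2) * ((-a2) * (inner ℝ w1 w1 : ℝ)) + 2 * ((-a2) * (a1 * (inner ℝ w1 w2 : ℝ)))
        + a1 * (a1 * (inner ℝ w2 w2 : ℝ)) := by
    simp only [inner_add_left, inner_add_right, real_inner_smul_left, real_inner_smul_right]
    rw [real_inner_comm w2 w1]; ring
  have hfin : (inner ℝ ((-a2) • w1 + a1 • w2) ((-a2) • w1 + a1 • w2) : ℝ) ≤ 0 := by
    rw [hq0, hnorm1, hnorm2, hip]
    nlinarith [mul_le_mul_of_nonneg_left hψle (mul_pos ha1 hB).le]
  have hv : (-a2) • w1 + a1 • w2 = 0 := by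
    have h0' : (0:ℝ) ≤ (inner ℝ ((-a2) • w1 + a1 • w2) ((-a2) • w1 + a1 • w2) : ℝ) :=
      real_inner_self_nonneg
    exact inner_self_eq_zero.1 (le_antisymm hfin h0')
  have hlin : ∀ i, (-a2) * c i + a1 * e i = 0 := by
    intro i
    have h := congrArg (fun v : EuclideanSpace ℝ (Fin d) => (inner ℝ v (x i) : ℝ)) hv
    simp only [inner_add_left, real_inner_smul_left, inner_zero_left] at h
    rw [← hc i, ← he i] at h
    exact h
  
  -- comparisons coming from active points of each label
  have hcase1 : ∀ i, lam i ≠ 0 → y i = 1 → a1 ≤ -a2 := by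
    intro i h0 hy1
    obtain ⟨hneg, hle⟩ := hactP i h0 hy1
    have hl := hlin i
    have hcpos : 0 < c i := by
      nlinarith [mul_pos ha1 (show (0:ℝ) < -(e i) by linarith), hB]
    rw [abs_of_pos hcpos, abs_of_neg hneg] at hle
    have hae : a1 * e i = a2 * c i := by linarith
    by_contra hcon
    push_neg at hcon
    nlinarith [mul_le_mul_of_nonneg_left hle ha1.le,
      (show a1 * ((-a2) * -(e i)) = (-a2) * ((-a2) * c i) from by linear_combination a2 * hae),
      mul_pos (mul_pos (show (0:ℝ) < a1 + -a2 by linarith) (show (0:ℝ) < a1 - -a2 by linarith)) hcpos]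
  have hcase2 : ∀ i, lam i ≠ 0 → y i = -1 → -a2 ≤ a1 := by
    intro i h0 hy1
    obtain ⟨hneg, hle⟩ := hactN i h0 hy1
    have hl := hlin i
    have hepos : 0 < e i := by
      nlinarith [mul_pos_of_neg_of_neg ha2 hneg, ha1]
    rw [abs_of_pos hepos, abs_of_neg hneg] at hle
    have hae : a1 * e i = a2 * c i := by linarith
    by_contra hcon
    push_neg at hcon
    nlinarith [mul_le_mul_of_nonneg_left hle hB.le,
      (show (-a2) * (a1 * -(c i)) = a1 * (a1 * e i) from by linear_combination (-a1) * hae),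
      mul_pos (mul_pos (show (0:ℝ) < -a2 + a1 by linarith) (show (0:ℝ) < -a2 - a1 by linarith)) hepos]
  -- all active points cannot share label 1
  have hall1 : (∀ i, lam i ≠ 0 → y i = 1) → False := by
    intro hall
    have hT1 : ∀ i, lam i * y i * φ (c i) = lam i * c i := by
      intro i
      rcases eq_or_ne (lam i) 0 with h0 | h0
      · rw [h0]; ring
      · have hy1 := hall i h0
        obtain ⟨hneg, _⟩ := hactP i h0 hy1
        have hcpos : 0 < c i := by
          nlinarith [hlin i, mul_pos ha1 (show (0:ℝ) < -(e i) by linarith), hB]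
        rw [hy1, phi_nonneg _ hcpos.le]; ring
    have hTa : ∑ i, lam i * c i = a1 := by
      rw [ha1']; exact Finset.sum_congr rfl fun i _ => (hT1 i).symm
    have hT2 : ∀ i, a1 * (lam i * y i * φ (e i)) = (α * a2) * (lam i * c i) := by
      intro i
      rcases eq_or_ne (lam i) 0 with h0 | h0
      · rw [h0]; ring
      · have hy1 := hall i h0
        obtain ⟨hneg, _⟩ := hactP i h0 hy1
        rw [hy1, phi_nonpos _ hneg.le]
        linear_combination (α * lam i) * (hlin i)
    have hTb : a1 * a2 = (α * a2) * a1 := by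
      have h1' : ∑ i, a1 * (lam i * y i * φ (e i)) = ∑ i, (α * a2) * (lam i * c i) :=
        Finset.sum_congr rfl fun i _ => hT2 i
      rw [← Finset.mul_sum, ← Finset.mul_sum, ← ha2', hTa] at h1'
      exact h1'
    nlinarith [hTb, mul_pos (mul_pos ha1 hB) (sub_pos.2 hα1)]
  -- all active points cannot share label -1
  have hall2 : (∀ i, lam i ≠ 0 → y i = -1) → False := by
    intro hall
    have hT1 : ∀ i, lam i * y i * φ (c i) = (-α) * (lam i * c i) := by
      intro i
      rcases eq_or_ne (lam i) 0 with h0 | h0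
      · rw [h0]; ring
      · have hy1 := hall i h0
        obtain ⟨hneg, _⟩ := hactN i h0 hy1
        rw [hy1, phi_nonpos _ hneg.le]; ring
    have hTa : a1 = (-α) * (∑ i, lam i * c i) := by
      rw [ha1', Finset.mul_sum]
      exact Finset.sum_congr rfl fun i _ => hT1 i
    have hT2 : ∀ i, a1 * (lam i * y i * φ (e i)) = (-a2) * (lam i * c i) := by
      intro i
      rcases eq_or_ne (lam i) 0 with h0 | h0
      · rw [h0]; ring
      · have hy1 := hall i h0
        obtain ⟨hneg, _⟩ := hactN i h0 hy1
        have hepos : 0 < e i := by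
          nlinarith [hlin i, mul_pos_of_neg_of_neg ha2 hneg, ha1]
        rw [hy1, phi_nonneg _ hepos.le]
        linear_combination (-(lam i)) * (hlin i)
    have hTb : a1 * a2 = (-a2) * (∑ i, lam i * c i) := by
      have h1' : ∑ i, a1 * (lam i * y i * φ (e i)) = ∑ i, (-a2) * (lam i * c i) :=
        Finset.sum_congr rfl fun i _ => hT2 i
      rw [← Finset.mul_sum, ← Finset.mul_sum, ← ha2'] at h1'
      exact h1'
    have hTc : α * (a1 * a2) = α * ((-a2) * (∑ i, lam i * c i)) := by rw [hTb]
    have hTd : α * (∑ i, lam i * c i) = -a1 := by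
      have : a1 = -(α * (∑ i, lam i * c i)) := by rw [hTa]; ring
      linarith
    have hTe : a2 * (α * (∑ i, lam i * c i)) = a2 * (-a1) := by rw [hTd]
    nlinarith [hTc, hTe, mul_pos (mul_pos ha1 hB) (sub_pos.2 hα1)]
  -- conclude a1 = -a2
  have hA : a1 = -a2 := by
    by_cases hp : ∃ i, lam i ≠ 0 ∧ y i = 1
    · obtain ⟨i, hi, hyi⟩ := hp
      by_cases hm : ∃ j, lam j ≠ 0 ∧ y j = -1
      · obtain ⟨j, hj, hyj⟩ := hm
        exact le_antisymm (hcase1 i hi hyi) (hcase2 j hj hyj)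
      · exfalso
        apply hall1
        intro k hk
        rcases hy k with h | h
        · exact h
        · exact absurd ⟨k, hk, h⟩ hm
    · exfalso
      apply hall2
      intro k hk
      rcases hy k with h | h
      · exact absurd ⟨k, hk, h⟩ hp
      · exact h
  -- final conclusions
  have hv2 := hv
  rw [← hA] at hv2
  have hadd : w1 + w2 = 0 := by
    have h2' : a1 • (w1 + w2) = 0 := by rw [smul_add]; exact hv2
    rcases smul_eq_zero.1 h2' with h | h
    · exact absurd h (ne_of_gt ha1)
    · exact h
  have hw : w1 = -w2 := by
    have := hadd
    exact eq_neg_of_add_eq_zero_left this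
  have hnormfin : a1 = ‖w1‖ := by
    have h1' : ‖w1‖ * ‖w1‖ = a1 * a1 := by
      rw [← real_inner_self_eq_norm_mul_norm, hnorm1]
    have h2' : (‖w1‖ - a1) * (‖w1‖ + a1) = 0 := by linear_combination h1'
    rcases mul_eq_zero.1 h2' with h | h
    · linarith
    · linarith [norm_nonneg w1]
  exact ⟨hw, hA, hnormfin⟩
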